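/- Let A and B be ℕ-graded k-algebras, let * be a star product on A and ⋆ a star product on B. Let η : A → B be a k-linear map which is a homomorphism of graded algebras for the original products (η(A_j) ⊆ B_j for all j, η(ab) = η(a)η(b), η(1) = 1) and which is also an algebra homomorphism for the star products (η(a * b) = η(a) ⋆ η(b) for all a, b ∈ A). Let S ⊆ ker(η) be a set of homogeneous elements such that ker(η) equals the k-span of { a·s·b : a, b ∈ A, s ∈ S }. Then ker(η) also equals the k-span of { a * s * b : a, b ∈ A, s ∈ S }, i.e. S generates ker(η) as a two-sided ideal with respect to the star products as well. -/

import Mathlib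

/-- A star product on an `ℕ`-graded `k`-algebra `A = ⊕ⱼ 𝒜 j`: an associative
`k`-bilinear operation `mul : A → A → A` such that for `a ∈ 𝒜 m` and `b ∈ 𝒜 n`
the difference `mul a b - a * b` lies in `A_{<m+n} = ⊕_{j<m+n} 𝒜 j`. -/
structure StarProduct (k : Type*) {A : Type*} [Field k] [Ring A] [Algebra k A]
    (𝒜 : ℕ → Submodule k A) where
  mul : A → A → A
  add_left : ∀ a b c : A, mul (a + b) c = mul a c + mul b c
  add_right : ∀ a b c : A, mul a (b + c) = mul a b + mul a c
  smul_left : ∀ (r : k) (a b : A), mul (r • a) b = r • mul a b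
  smul_right : ∀ (r : k) (a b : A), mul a (r • b) = r • mul a b
  assoc : ∀ a b c : A, mul (mul a b) c = mul a (mul b c)
  lower : ∀ (m n : ℕ) (a b : A), a ∈ 𝒜 m → b ∈ 𝒜 n →
    mul a b - a * b ∈ ⨆ j < m + n, 𝒜 j

section Aux

variable {k A B : Type*} [Field k] [Ring A] [Algebra k A] [Ring B] [Algebra k B]

lemma StarProduct.zero_left' {𝒜 : ℕ → Submodule k A} (s : StarProduct k 𝒜) (b : A) :
    s.mul 0 b = 0 := by
  have h := s.smul_left 0 0 b
  simpa using h

lemma StarProduct.zero_right' {𝒜 : ℕ → Submodule k A} (s : StarProduct k 𝒜) (a : A) :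
    s.mul a 0 = 0 := by
  have h := s.smul_right 0 a 0
  simpa using h

lemma StarProduct.sub_right' {𝒜 : ℕ → Submodule k A} (s : StarProduct k 𝒜) (a u v : A) :
    s.mul a (u - v) = s.mul a u - s.mul a v := by
  have huv : u - v + v = u := by abel
  have h := s.add_right a (u - v) v
  rw [huv] at h
  rw [eq_sub_iff_add_eq, ← h]

lemma eta_decompose {𝒜 : ℕ → Submodule k A} [GradedAlgebra 𝒜]
    {ℬ : ℕ → Submodule k B} [GradedAlgebra ℬ] (η : A →ₐ[k] B)
    (hgraded : ∀ (j : ℕ), ∀ a ∈ 𝒜 j, η a ∈ ℬ j) (z : A) (j : ℕ) :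
    η (DirectSum.decompose 𝒜 z j : A) = (DirectSum.decompose ℬ (η z) j : B) := by
  induction z using DirectSum.Decomposition.inductionOn 𝒜 with
  | zero => simp
  | @homogeneous i m =>
    by_cases h : i = j
    · subst h
      rw [DirectSum.decompose_of_mem_same 𝒜 m.2,
        DirectSum.decompose_of_mem_same ℬ (hgraded i m.1 m.2)]
    · rw [DirectSum.decompose_of_mem_ne 𝒜 m.2 h,
        DirectSum.decompose_of_mem_ne ℬ (hgraded i m.1 m.2) h, map_zero]
  | add x y hx hy =>
    have e1 : η (x + y) = η x + η y := map_add η x y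
    have e2 : ∀ u v : A, η (u + v) = η u + η v := fun u v => map_add η u v
    rw [e1, DirectSum.decompose_add, DirectSum.decompose_add, DirectSum.add_apply,
      DirectSum.add_apply, Submodule.coe_add, Submodule.coe_add, e2, hx, hy]

lemma comp_eq_zero {𝒜 : ℕ → Submodule k A} [GradedAlgebra 𝒜] {N i : ℕ} (hi : N ≤ i) {z : A}
    (hz : z ∈ ⨆ j < N, 𝒜 j) : (DirectSum.decompose 𝒜 z i : A) = 0 := by
  refine Submodule.iSup_induction (motive := fun z => (DirectSum.decompose 𝒜 z i : A) = 0) _ hz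
    ?_ (by simp) ?_
  · intro j x hx
    by_cases h : j < N
    · rw [iSup_pos h] at hx
      exact DirectSum.decompose_of_mem_ne 𝒜 hx (Nat.ne_of_lt (lt_of_lt_of_le h hi))
    · rw [iSup_neg h] at hx
      simp only [Submodule.mem_bot] at hx
      simp [hx]
  · intro x y hx hy
    rw [DirectSum.decompose_add, DirectSum.add_apply, Submodule.coe_add, hx, hy, add_zero]

lemma L_mono' {𝒜 : ℕ → Submodule k A} {i N : ℕ} (h : i ≤ N) :
    (⨆ j < i, 𝒜 j) ≤ ⨆ j < N, 𝒜 j :=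
  biSup_mono fun _ hj => lt_of_lt_of_le hj h

lemma star_lower_ext {𝒜 : ℕ → Submodule k A} [GradedAlgebra 𝒜] (s : StarProduct k 𝒜)
    {m N : ℕ} {a : A} (ha : a ∈ 𝒜 m) {u : A} (hu : u ∈ ⨆ j < N, 𝒜 j) :
    s.mul a u ∈ ⨆ j < m + N, 𝒜 j := by
  refine Submodule.iSup_induction (motive := fun u => s.mul a u ∈ ⨆ j < m + N, 𝒜 j) _ hu
    ?_ ?_ ?_
  · intro j x hx
    by_cases h : j < N
    · rw [iSup_pos h] at hx
      have h1 : s.mul a x - a * x ∈ ⨆ l < m + j, 𝒜 l := s.lower m j a x ha hx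
      have h2 : s.mul a x = (s.mul a x - a * x) + a * x := by abel
      rw [h2]
      refine Submodule.add_mem _ (L_mono' (by omega) h1) ?_
      exact Submodule.mem_iSup_of_mem (m + j) (Submodule.mem_iSup_of_mem (by omega)
        (SetLike.mul_mem_graded ha hx))
    · rw [iSup_neg h] at hx
      simp only [Submodule.mem_bot] at hx
      rw [hx, s.zero_right']
      exact Submodule.zero_mem _
  · show s.mul a (0 : A) ∈ _
    rw [s.zero_right']
    exact Submodule.zero_mem _
  · intro x y hx hy
    rw [s.add_right]
    exact Submodule.add_mem _ hx hy

end Aux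

theorem starProduct_kernel_generators
    {k A B : Type*} [Field k] [Ring A] [Algebra k A] [Ring B] [Algebra k B]
    (𝒜 : ℕ → Submodule k A) [GradedAlgebra 𝒜]
    (ℬ : ℕ → Submodule k B) [GradedAlgebra ℬ]
    (s : StarProduct k 𝒜) (t : StarProduct k ℬ)
    (η : A →ₐ[k] B)
    (hgraded : ∀ (j : ℕ), ∀ a ∈ 𝒜 j, η a ∈ ℬ j)
    (hstar : ∀ a b : A, η (s.mul a b) = t.mul (η a) (η b))
    (S : Set A)
    (hShomog : ∀ x ∈ S, ∃ j : ℕ, x ∈ 𝒜 j)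
    (hSker : ∀ x ∈ S, η x = 0)
    (hker : LinearMap.ker η.toLinearMap =
      Submodule.span k {y : A | ∃ a b : A, ∃ x ∈ S, y = a * x * b}) :
    LinearMap.ker η.toLinearMap =
      Submodule.span k {y : A | ∃ a b : A, ∃ x ∈ S, y = s.mul a (s.mul x b)} := by
  classical
  set G : Set A := {y : A | ∃ a b : A, ∃ x ∈ S, y = a * x * b} with hG
  set G' : Set A := {y : A | ∃ a b : A, ∃ x ∈ S, y = s.mul a (s.mul x b)} with hG'
  -- star-product generators are in the kernel
  have hη' : ∀ (a b x : A), x ∈ S → η (s.mul a (s.mul x b)) = 0 := by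
    intro a b x hx
    rw [hstar, hstar, hSker x hx, t.zero_left', t.zero_right']
  -- the key induction on the degree bound
  have key : ∀ N : ℕ, ∀ z : A, η z = 0 → z ∈ (⨆ j < N, 𝒜 j) →
      z ∈ Submodule.span k G' := by
    intro N
    induction N using Nat.strong_induction_on with
    | _ N IH =>
      intro z hz hzL
      rw [← DirectSum.sum_support_decompose 𝒜 z]
      refine Submodule.sum_mem _ fun j _ => ?_
      by_cases hjN : j < N
      · set zj : A := (DirectSum.decompose 𝒜 z j : A) with hzjdef
        have hzjη : η zj = 0 := by
          rw [hzjdef, eta_decompose η hgraded z j, hz]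
          simp
        have hzjmem : zj ∈ 𝒜 j := (DirectSum.decompose 𝒜 z j).2
        have hzjG : zj ∈ Submodule.span k G := by
          rw [← hker]
          exact LinearMap.mem_ker.mpr hzjη
        -- core: for homogeneous a, b, x, the projection of a*x*b to degree j is in span G'
        have gen2 : ∀ (d : ℕ) (x : A), x ∈ S → x ∈ 𝒜 d → ∀ (n : ℕ) (b : A), b ∈ 𝒜 n →
            ∀ a : A, (DirectSum.decompose 𝒜 (a * x * b) j : A) ∈ Submodule.span k G' := by
          intro d x hxS hxd n b hb a
          induction a using DirectSum.Decomposition.inductionOn 𝒜 with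
          | zero => simp
          | @homogeneous m a =>
            have ha : (a : A) ∈ 𝒜 m := a.2
            have habx : (a : A) * x * b ∈ 𝒜 (m + d + n) :=
              SetLike.mul_mem_graded (SetLike.mul_mem_graded ha hxd) hb
            by_cases h : m + d + n = j
            · rw [DirectSum.decompose_of_mem_same 𝒜 (h ▸ habx)]
              -- show a * x * b ∈ span G'
              have h1 : s.mul x b - x * b ∈ ⨆ l < d + n, 𝒜 l := s.lower d n x b hxd hb
              have h2 : s.mul (a : A) (s.mul x b - x * b) ∈ ⨆ l < m + (d + n), 𝒜 l :=
                star_lower_ext s ha h1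
              have h3 : s.mul (a : A) (x * b) - (a : A) * (x * b) ∈ ⨆ l < m + (d + n), 𝒜 l :=
                s.lower m (d + n) a (x * b) ha (SetLike.mul_mem_graded hxd hb)
              have hweq : s.mul (a : A) (s.mul x b) - (a : A) * x * b =
                  s.mul (a : A) (s.mul x b - x * b) +
                    (s.mul (a : A) (x * b) - (a : A) * (x * b)) := by
                rw [s.sub_right', mul_assoc]
                abel
              have hwL : s.mul (a : A) (s.mul x b) - (a : A) * x * b ∈ ⨆ l < j, 𝒜 l := by
                rw [hweq, ← h, add_assoc]
                exact Submodule.add_mem _ h2 h3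
              have hwη : η (s.mul (a : A) (s.mul x b) - (a : A) * x * b) = 0 := by
                rw [map_sub, hη' _ _ x hxS, map_mul, map_mul, hSker x hxS]
                simp
              have hwJ' : s.mul (a : A) (s.mul x b) - (a : A) * x * b ∈
                  Submodule.span k G' := IH j hjN _ hwη hwL
              have hstarmem : s.mul (a : A) (s.mul x b) ∈ Submodule.span k G' :=
                Submodule.subset_span ⟨a, b, x, hxS, rfl⟩
              have : (a : A) * x * b =
                  s.mul (a : A) (s.mul x b) -
                    (s.mul (a : A) (s.mul x b) - (a : A) * x * b) := by abel
              rw [this]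
              exact Submodule.sub_mem _ hstarmem hwJ'
            · rw [DirectSum.decompose_of_mem_ne 𝒜 habx h]
              exact Submodule.zero_mem _
          | add a a' hA hA' =>
            have e : (a + a') * x * b = a * x * b + a' * x * b := by rw [add_mul, add_mul]
            rw [e, DirectSum.decompose_add, DirectSum.add_apply, Submodule.coe_add]
            exact Submodule.add_mem _ hA hA'
        have gen : ∀ (a b x : A), x ∈ S →
            (DirectSum.decompose 𝒜 (a * x * b) j : A) ∈ Submodule.span k G' := by
          intro a b x hxS
          obtain ⟨d, hxd⟩ := hShomog x hxS
          induction b using DirectSum.Decomposition.inductionOn 𝒜 with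
          | zero => simp
          | @homogeneous n b => exact gen2 d x hxS hxd n b b.2 a
          | add b b' hB hB' =>
            have e : a * x * (b + b') = a * x * b + a * x * b' := by rw [mul_add]
            rw [e, DirectSum.decompose_add, DirectSum.add_apply, Submodule.coe_add]
            exact Submodule.add_mem _ hB hB'
        -- projection of span G lies in span G'
        have hproj : ∀ v ∈ Submodule.span k G,
            (DirectSum.decompose 𝒜 v j : A) ∈ Submodule.span k G' := by
          intro v hv
          induction hv using Submodule.span_induction with
          | mem y hy =>
            obtain ⟨a, b, x, hxS, rfl⟩ := hy
            exact gen a b x hxS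
          | zero => simp
          | add u v _ _ hu hv =>
            rw [DirectSum.decompose_add, DirectSum.add_apply, Submodule.coe_add]
            exact Submodule.add_mem _ hu hv
          | smul r u _ hu =>
            rw [DirectSum.decompose_smul, DirectSum.smul_apply, Submodule.coe_smul]
            exact Submodule.smul_mem _ _ hu
        have := hproj zj hzjG
        rwa [DirectSum.decompose_of_mem_same 𝒜 hzjmem] at this
      · rw [comp_eq_zero (le_of_not_gt hjN) hzL]
        exact Submodule.zero_mem _
  apply le_antisymm
  · intro z hz
    have hz0 : η z = 0 := LinearMap.mem_ker.mp hz
    set N : ℕ := ((DirectSum.decompose 𝒜 z).support.sup id) + 1 with hN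
    have hzL : z ∈ ⨆ j < N, 𝒜 j := by
      rw [← DirectSum.sum_support_decompose 𝒜 z]
      refine Submodule.sum_mem _ fun j hj => ?_
      have hjN : j < N := Nat.lt_succ_of_le (Finset.le_sup (f := id) hj)
      exact Submodule.mem_iSup_of_mem j (Submodule.mem_iSup_of_mem hjN (SetLike.coe_mem _))
    exact key N z hz0 hzL
  · rw [Submodule.span_le]
    rintro y ⟨a, b, x, hxS, rfl⟩
    exact LinearMap.mem_ker.mpr (hη' a b x hxS)
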